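/- Let $X$, $Y$ be finite-dimensional real inner product spaces. Let $b : X \times Y \to \mathbb{R}$ satisfy the inf-sup condition with constant $\beta > 0$, let $a : X \times X \to \mathbb{R}$ be bounded (constant $\gamma_a$), coercive (constant $\alpha_a > 0$), and symmetric, and let $m$ be an inner product on $X$ with $m(u,v) \leq \gamma_m \|u\|_X\|v\|_X$. Suppose $e \in X$, $e' \in X$, $p \in Y$, $\Delta t > 0$, and functionals $r^1 \in X'$, $r^2 \in Y'$ satisfy: $\tfrac{1}{\Delta t}m(e - e', v) + a(e,v) + b(v,p) = r^1(v)$ for all $v \in X$ and $b(e, q) = r^2(q)$ for all $q \in Y$. Then, with $\|e\|_a = \sqrt{a(e,e)}$ and $\|w\|_m = \sqrt{m(w,w)}$, one has $\tfrac{1}{\Delta t}(\|e\|_m^2 - \|e'\|_m^2) + \|e\|_a^2 \leq \tfrac{\|r^1\|_{X'}^2}{\alpha_a} + \tfrac{2}{\beta}\big(1 + \sqrt{\tfrac{\gamma_a}{\alpha_a}}\big)\|r^1\|_{X'}\|r^2\|_{Y'} + \big(\tfrac{\gamma_m}{\Delta t} + \gamma_a\big)\tfrac{\|r^2\|_{Y'}^2}{\beta^2}$.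 -/

import Mathlib

open InnerProductSpace in
noncomputable def rieszL (X : Type*) [NormedAddCommGroup X] [InnerProductSpace ℝ X]
    [FiniteDimensional ℝ X] : (X →ₗ[ℝ] ℝ) →ₗ[ℝ] X where
  toFun f := (toDual ℝ X).symm f.toContinuousLinearMap
  map_add' f g := by
    apply ext_inner_left ℝ
    intro v
    simp [toDual_symm_apply]
  map_smul' c f := by
    apply ext_inner_left ℝ
    intro v
    simp [toDual_symm_apply, inner_smul_right]

lemma rieszL_spec {X : Type*} [NormedAddCommGroup X] [InnerProductSpace ℝ X]
    [FiniteDimensional ℝ X] (f : X →ₗ[ℝ] ℝ) (v : X) :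
    (inner ℝ (rieszL X f) v : ℝ) = f v := by
  simp [rieszL, InnerProductSpace.toDual_symm_apply]

lemma exists_w {X Y : Type*}
    [NormedAddCommGroup X] [InnerProductSpace ℝ X] [FiniteDimensional ℝ X]
    [NormedAddCommGroup Y] [InnerProductSpace ℝ Y] [FiniteDimensional ℝ Y]
    (b : X →ₗ[ℝ] Y →ₗ[ℝ] ℝ) (β : ℝ) (hβ : 0 < β)
    (hinfsup : ∀ q : Y, β * ‖q‖ ≤ ⨆ v : {v : X // v ≠ 0}, b (v : X) q / ‖(v : X)‖)
    (r2 : Y →L[ℝ] ℝ) :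
    ∃ w : X, (∀ q : Y, b w q = r2 q) ∧ ‖w‖ ≤ ‖r2‖ / β := by
  set Bs : Y →ₗ[ℝ] X := (rieszL X).comp b.flip with hBs
  have hBspec : ∀ (q : Y) (v : X), (inner ℝ (Bs q) v : ℝ) = b v q := by
    intro q v; simp [hBs, rieszL_spec]
  set T : Y →ₗ[ℝ] Y := (rieszL Y).comp (b.comp Bs) with hT
  have hTspec : ∀ (q q' : Y), (inner ℝ (T q) q' : ℝ) = b (Bs q) q' := by
    intro q q'; simp [hT, rieszL_spec]
  have hlow : ∀ q : Y, β * ‖q‖ ≤ ‖Bs q‖ := by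
    intro q
    refine (hinfsup q).trans (Real.iSup_le ?_ (norm_nonneg _))
    rintro ⟨v, hv⟩
    have hvpos : 0 < ‖v‖ := norm_pos_iff.mpr hv
    rw [div_le_iff₀ hvpos]
    calc b v q = (inner ℝ (Bs q) v : ℝ) := (hBspec q v).symm
      _ ≤ ‖Bs q‖ * ‖v‖ := real_inner_le_norm _ _
  have hTinj : Function.Injective T := by
    intro q1 q2 h
    rw [← sub_eq_zero]
    have h0 : T (q1 - q2) = 0 := by rw [map_sub, h, sub_self]
    set q := q1 - q2
    have h1 : (inner ℝ (Bs q) (Bs q) : ℝ) = 0 := by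
      rw [hBspec q (Bs q), ← hTspec q q, h0, inner_zero_left]
    have h2 : Bs q = 0 := by
      rwa [inner_self_eq_zero] at h1
    have h3 : β * ‖q‖ ≤ 0 := by simpa [h2] using hlow q
    have : ‖q‖ = 0 := le_antisymm (by nlinarith [norm_nonneg q]) (norm_nonneg q)
    exact norm_eq_zero.mp this
  obtain ⟨q0, hq0⟩ := LinearMap.injective_iff_surjective.mp hTinj (rieszL Y (r2 : Y →ₗ[ℝ] ℝ))
  refine ⟨Bs q0, fun q => ?_, ?_⟩
  · rw [← hTspec, hq0, rieszL_spec]; rfl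
  · have h1 : ‖Bs q0‖ ^ 2 = b (Bs q0) q0 := by
      rw [← hBspec q0 (Bs q0), real_inner_self_eq_norm_sq]
    have h2 : b (Bs q0) q0 = r2 q0 := by rw [← hTspec, hq0, rieszL_spec]; rfl
    have h3 : r2 q0 ≤ ‖r2‖ * ‖q0‖ := (le_abs_self _).trans (r2.le_opNorm q0)
    have h4 : β * ‖q0‖ ≤ ‖Bs q0‖ := hlow q0
    rw [le_div_iff₀ hβ]
    rcases eq_or_lt_of_le (norm_nonneg (Bs q0)) with hW | hW
    · rw [← hW, zero_mul]; exact norm_nonneg r2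
    · have h5 : β * ‖Bs q0‖ ^ 2 ≤ β * (‖r2‖ * ‖q0‖) := by nlinarith
      have h7 : ‖r2‖ * (β * ‖q0‖) ≤ ‖r2‖ * ‖Bs q0‖ :=
        mul_le_mul_of_nonneg_left h4 (norm_nonneg r2)
      rw [← mul_le_mul_iff_of_pos_right hW]
      nlinarith [h5, h7]

lemma bilin_cs {X : Type*} [NormedAddCommGroup X] [InnerProductSpace ℝ X]
    (a : X →ₗ[ℝ] X →ₗ[ℝ] ℝ) (hsym : ∀ u v : X, a u v = a v u)
    (hpos : ∀ v : X, 0 ≤ a v v) (hdef : ∀ v : X, a v v = 0 → v = 0) (u v : X) :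
    a u v ≤ Real.sqrt (a u u) * Real.sqrt (a v v) := by
  by_cases hv : v = 0
  · simp [hv]
  · have hvv : 0 < a v v := (hpos v).lt_of_ne (fun h => hv (hdef v h.symm))
    have h0 : 0 ≤ a (u - (a u v / a v v) • v) (u - (a u v / a v v) • v) := hpos _
    simp only [map_sub, map_smul, LinearMap.sub_apply, LinearMap.smul_apply,
      smul_eq_mul] at h0
    rw [hsym v u] at h0
    have hsq : (a u v) ^ 2 ≤ a u u * a v v := by
      field_simp at h0
      have h0' : 0 ≤ ((a u u * a v v - a u v * a u v) / a v v) * a v v :=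
        mul_nonneg (div_nonneg (by nlinarith [h0]) hvv.le) hvv.le
      rw [div_mul_cancel₀ _ hvv.ne'] at h0'
      nlinarith [h0']
    calc a u v ≤ |a u v| := le_abs_self _
      _ = Real.sqrt ((a u v) ^ 2) := (Real.sqrt_sq_eq_abs _).symm
      _ ≤ Real.sqrt (a u u * a v v) := Real.sqrt_le_sqrt hsq
      _ = Real.sqrt (a u u) * Real.sqrt (a v v) := Real.sqrt_mul (hpos u) _

lemma sqrt_mul_le_half {x y : ℝ} (hx : 0 ≤ x) (hy : 0 ≤ y) :
    Real.sqrt x * Real.sqrt y ≤ x / 2 + y / 2 := by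
  nlinarith [sq_nonneg (Real.sqrt x - Real.sqrt y), Real.sq_sqrt hx, Real.sq_sqrt hy]

lemma expand_sq (R1 W sa sg : ℝ) (hsa : sa ≠ 0) :
    (R1 / sa + sg * W) ^ 2 = R1 ^ 2 / sa ^ 2 + 2 * (sg / sa) * R1 * W + sg ^ 2 * W ^ 2 := by
  field_simp
  ring

lemma combine_main {u MD Dm A aew mew r1e r1w g sg ga q1 q2 R1 W : ℝ}
    (hkey : u * MD + u * Dm + 2 * A = 2 * r1e - 2 * r1w + 2 * (u * mew) + 2 * aew)
    (hx1 : 2 * (u * mew) ≤ u * Dm + u * (g * W ^ 2))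
    (hyoung : 2 * (r1e + aew) ≤ A + q1)
    (hexpand : q1 = q2 + 2 * sg * R1 * W + ga * W ^ 2)
    (hr1w : -(R1 * W) ≤ r1w)
    (_hΔpos : 0 ≤ u * Dm) :
    u * MD + A ≤ q2 + 2 * (1 + sg) * R1 * W + (g * u + ga) * W ^ 2 := by
  nlinarith [hkey, hx1, hyoung, hexpand, hr1w]

set_option maxHeartbeats 2000000 in
/-- Single-time-step estimate in the symmetric case (Proposition 2.2). -/
theorem stmt5 {X Y : Type*}
    [NormedAddCommGroup X] [InnerProductSpace ℝ X] [FiniteDimensional ℝ X]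
    [NormedAddCommGroup Y] [InnerProductSpace ℝ Y] [FiniteDimensional ℝ Y]
    (b : X →ₗ[ℝ] Y →ₗ[ℝ] ℝ) (a m : X →ₗ[ℝ] X →ₗ[ℝ] ℝ)
    (β γa αa γm Δt : ℝ) (hβ : 0 < β) (hαa : 0 < αa) (hΔt : 0 < Δt)
    (hinfsup : ∀ q : Y, β * ‖q‖ ≤ ⨆ v : {v : X // v ≠ 0}, b (v : X) q / ‖(v : X)‖)
    (habdd : ∀ u v : X, a u v ≤ γa * ‖u‖ * ‖v‖)
    (hacoer : ∀ v : X, αa * ‖v‖ ^ 2 ≤ a v v)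
    (hasym : ∀ u v : X, a u v = a v u)
    (hmsym : ∀ u v : X, m u v = m v u)
    (hmpos : ∀ v : X, v ≠ 0 → 0 < m v v)
    (hmbdd : ∀ u v : X, m u v ≤ γm * ‖u‖ * ‖v‖)
    (e e' : X) (p : Y) (r1 : X →L[ℝ] ℝ) (r2 : Y →L[ℝ] ℝ)
    (heq1 : ∀ v : X, (1 / Δt) * m (e - e') v + a e v + b v p = r1 v)
    (heq2 : ∀ q : Y, b e q = r2 q) :
    (1 / Δt) * (m e e - m e' e') + a e e ≤
      ‖r1‖ ^ 2 / αa + (2 / β) * (1 + Real.sqrt (γa / αa)) * ‖r1‖ * ‖r2‖ +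
        (γm / Δt + γa) * ‖r2‖ ^ 2 / β ^ 2 := by
  by_cases hX : ∃ v : X, v ≠ 0
  case neg =>
    push_neg at hX
    have he : e = 0 := hX e
    have he' : e' = 0 := hX e'
    have hr1 : ‖r1‖ = 0 := by
      have h : r1 = 0 := by ext v; rw [hX v]; simp
      simp [h]
    have hr2 : ‖r2‖ = 0 := by
      have h : r2 = 0 := by
        ext q; rw [← heq2 q, he]; simp
      simp [h]
    simp [he, he', hr1, hr2]
  case pos =>
    obtain ⟨v0, hv0⟩ := hX
    have hv0n : 0 < ‖v0‖ := norm_pos_iff.mpr hv0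
    have hγa : 0 < γa := by nlinarith [hacoer v0, habdd v0 v0, mul_pos hv0n hv0n, sq_nonneg ‖v0‖]
    have hγm : 0 < γm := by nlinarith [hmpos v0 hv0, hmbdd v0 v0, mul_pos hv0n hv0n]
    have hmnonneg : ∀ v : X, 0 ≤ m v v := by
      intro v
      by_cases h : v = 0
      · simp [h]
      · exact (hmpos v h).le
    have hmdef : ∀ v : X, m v v = 0 → v = 0 := by
      intro v h
      by_contra hv
      exact (hmpos v hv).ne' h
    have hanonneg : ∀ v : X, 0 ≤ a v v := fun v => le_trans (by positivity) (hacoer v)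
    have hadef : ∀ v : X, a v v = 0 → v = 0 := by
      intro v h
      have h2 := hacoer v
      rw [h] at h2
      have h3 : ‖v‖ ^ 2 ≤ 0 := by nlinarith [sq_nonneg ‖v‖]
      have h4 : ‖v‖ ^ 2 = 0 := le_antisymm h3 (sq_nonneg _)
      have h5 : ‖v‖ = 0 := by
        have := pow_eq_zero_iff (n := 2) (by norm_num) |>.mp h4
        exact this
      exact norm_eq_zero.mp h5
    obtain ⟨w, hw1, hw2⟩ := exists_w b β hβ hinfsup r2
    have hWnonneg : 0 ≤ ‖w‖ := norm_nonneg w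
    have hA : 0 ≤ a e e := hanonneg e
    have hΔm : 0 ≤ m (e - e') (e - e') := hmnonneg _
    have hmww : 0 ≤ m w w := hmnonneg w
    -- the error identity tested with v = e - w
    have hbwp : b (e - w) p = 0 := by
      rw [map_sub, LinearMap.sub_apply, heq2 p, hw1 p, sub_self]
    have hid : (1 / Δt) * m (e - e') (e - w) + a e (e - w) = r1 (e - w) := by
      have h := heq1 (e - w)
      rw [hbwp] at h
      linarith
    have hexp1 : m (e - e') (e - w) = m (e - e') e - m (e - e') w := map_sub _ _ _
    have hexp2 : a e (e - w) = a e e - a e w := map_sub _ _ _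
    have hexp3 : r1 (e - w) = r1 e - r1 w := map_sub _ _ _
    have hexp4 : 2 * m (e - e') e = m e e - m e' e' + m (e - e') (e - e') := by
      simp only [map_sub, LinearMap.sub_apply]
      linarith [hmsym e e']
    have hkey : (1 / Δt) * (m e e - m e' e') + (1 / Δt) * m (e - e') (e - e') + 2 * a e e
        = 2 * r1 e - 2 * r1 w + 2 * ((1 / Δt) * m (e - e') w) + 2 * a e w := by
      have h := hid
      rw [hexp1, hexp2, hexp3] at h
      linear_combination 2 * h - (1 / Δt) * hexp4
    -- bounds
    have hb1 : m (e - e') w ≤ Real.sqrt (m (e - e') (e - e')) * Real.sqrt (m w w) :=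
      bilin_cs m hmsym hmnonneg hmdef _ _
    have hb2 : Real.sqrt (m (e - e') (e - e')) * Real.sqrt (m w w)
        ≤ m (e - e') (e - e') / 2 + m w w / 2 := sqrt_mul_le_half hΔm hmww
    have hb3 : m w w ≤ γm * ‖w‖ ^ 2 := by linarith [hmbdd w w]
    have hx1 : 2 * ((1 / Δt) * m (e - e') w)
        ≤ (1 / Δt) * m (e - e') (e - e') + (1 / Δt) * (γm * ‖w‖ ^ 2) := by
      have h' : m (e - e') w ≤ m (e - e') (e - e') / 2 + γm * ‖w‖ ^ 2 / 2 := by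
        linarith [hb1.trans hb2]
      have hu : (0:ℝ) ≤ 1 / Δt := by positivity
      linarith [mul_le_mul_of_nonneg_left h' hu]
    have haw : a e w ≤ Real.sqrt (a e e) * Real.sqrt (a w w) :=
      bilin_cs a hasym hanonneg hadef e w
    have haww : Real.sqrt (a w w) ≤ Real.sqrt γa * ‖w‖ := by
      calc Real.sqrt (a w w) ≤ Real.sqrt (γa * ‖w‖ ^ 2) :=
            Real.sqrt_le_sqrt (by nlinarith [habdd w w])
        _ = Real.sqrt γa * ‖w‖ := by
            rw [Real.sqrt_mul hγa.le, Real.sqrt_sq hWnonneg]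
    have haw2 : a e w ≤ Real.sqrt (a e e) * (Real.sqrt γa * ‖w‖) :=
      haw.trans (mul_le_mul_of_nonneg_left haww (Real.sqrt_nonneg _))
    have hne : ‖e‖ ≤ Real.sqrt (a e e) / Real.sqrt αa := by
      rw [le_div_iff₀ (Real.sqrt_pos.mpr hαa)]
      have h : ‖e‖ * Real.sqrt αa = Real.sqrt (αa * ‖e‖ ^ 2) := by
        rw [Real.sqrt_mul hαa.le, Real.sqrt_sq (norm_nonneg e)]; ring
      rw [h]
      exact Real.sqrt_le_sqrt (hacoer e)
    have hr1e : r1 e ≤ ‖r1‖ * ‖e‖ := (le_abs_self _).trans (by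
      have := r1.le_opNorm e
      rwa [Real.norm_eq_abs] at this)
    have hr1w : -(‖r1‖ * ‖w‖) ≤ r1 w := by
      have h := r1.le_opNorm w
      rw [Real.norm_eq_abs] at h
      exact (abs_le.mp h).1
    have hsA : Real.sqrt (a e e) ^ 2 = a e e := Real.sq_sqrt hA
    have hyoung : 2 * (r1 e + a e w)
        ≤ a e e + (‖r1‖ / Real.sqrt αa + Real.sqrt γa * ‖w‖) ^ 2 := by
      have h1 : r1 e ≤ ‖r1‖ * (Real.sqrt (a e e) / Real.sqrt αa) :=
        hr1e.trans (mul_le_mul_of_nonneg_left hne (norm_nonneg r1))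
      have h1' : r1 e ≤ Real.sqrt (a e e) * (‖r1‖ / Real.sqrt αa) := by
        rw [show Real.sqrt (a e e) * (‖r1‖ / Real.sqrt αa)
            = ‖r1‖ * (Real.sqrt (a e e) / Real.sqrt αa) by ring]
        exact h1
      have ht := two_mul_le_add_sq (Real.sqrt (a e e))
        (‖r1‖ / Real.sqrt αa + Real.sqrt γa * ‖w‖)
      linarith [h1', haw2, ht, hsA.le, hsA.ge]
    have hexpand : (‖r1‖ / Real.sqrt αa + Real.sqrt γa * ‖w‖) ^ 2
        = ‖r1‖ ^ 2 / αa + 2 * Real.sqrt (γa / αa) * ‖r1‖ * ‖w‖ + γa * ‖w‖ ^ 2 := by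
      have h1 : Real.sqrt αa ^ 2 = αa := Real.sq_sqrt hαa.le
      have h2 : Real.sqrt γa ^ 2 = γa := Real.sq_sqrt hγa.le
      have h3 : Real.sqrt (γa / αa) = Real.sqrt γa / Real.sqrt αa :=
        Real.sqrt_div hγa.le αa
      have hsa : Real.sqrt αa ≠ 0 := ne_of_gt (Real.sqrt_pos.mpr hαa)
      rw [h3, expand_sq ‖r1‖ ‖w‖ _ _ hsa, h1, h2]
    have hmain : (1 / Δt) * (m e e - m e' e') + a e e
        ≤ ‖r1‖ ^ 2 / αa + 2 * (1 + Real.sqrt (γa / αa)) * ‖r1‖ * ‖w‖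
          + (γm * (1 / Δt) + γa) * ‖w‖ ^ 2 := by
      have hΔpos : 0 ≤ (1 / Δt) * m (e - e') (e - e') := by positivity
      exact combine_main hkey hx1 hyoung hexpand hr1w hΔpos
    have hc2 : 0 ≤ 2 * (1 + Real.sqrt (γa / αa)) * ‖r1‖ := by positivity
    have hc3 : 0 ≤ γm * (1 / Δt) + γa := by positivity
    have hW2 : ‖w‖ ^ 2 ≤ (‖r2‖ / β) ^ 2 := by
      exact pow_le_pow_left₀ hWnonneg hw2 2
    have hfin : 2 * (1 + Real.sqrt (γa / αa)) * ‖r1‖ * ‖w‖ + (γm * (1 / Δt) + γa) * ‖w‖ ^ 2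
        ≤ 2 * (1 + Real.sqrt (γa / αa)) * ‖r1‖ * (‖r2‖ / β)
          + (γm * (1 / Δt) + γa) * (‖r2‖ / β) ^ 2 := by
      have h1 := mul_le_mul_of_nonneg_left hw2 hc2
      have h2 := mul_le_mul_of_nonneg_left hW2 hc3
      linarith only [h1, h2]
    have hend : ‖r1‖ ^ 2 / αa + 2 * (1 + Real.sqrt (γa / αa)) * ‖r1‖ * (‖r2‖ / β)
          + (γm * (1 / Δt) + γa) * (‖r2‖ / β) ^ 2
        = ‖r1‖ ^ 2 / αa + 2 / β * (1 + Real.sqrt (γa / αa)) * ‖r1‖ * ‖r2‖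
          + (γm / Δt + γa) * ‖r2‖ ^ 2 / β ^ 2 := by
      field_simp
    linarith only [hmain, hfin, hend.le]
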